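/- Let A be the 2n×2n matrix of the reduction (with blocks E', (k−1)I-type coupling, diagonal h, and −ε entries as specified). If the graph G has a clique of size at least k, and S = {v_1,...,v_m} is a maximal clique containing it with m = |S| ≥ k, then the strategy p with p_i = 1/m for i ∈ [m] and p_i = 0 otherwise is a strict symmetric Nash equilibrium of (A,A): (Ap)_i = (m−1)/m for i ∈ [m], and (Ap)_j < (m−1)/m for all j ∉ [m]. -/

import Mathlib

open Matrix

/-- The symmetric `2n × 2n` reduction matrix built from a graph `G` on `n` vertices:
entries `E'` in the top-left block (`1` for edges, `−h` for non-edges, `0` on the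
diagonal), `k−1` coupling entries at `|i−j| = n`, `h` on the bottom-right diagonal,
and `−ε` everywhere else. -/
def redMatrix (n k : ℕ) (G : SimpleGraph (Fin n)) [DecidableRel G.Adj] (h ε : ℝ) :
    Matrix (Fin (2 * n)) (Fin (2 * n)) ℝ := fun i j =>
  if hi : (i : ℕ) < n then
    if hj : (j : ℕ) < n then
      if (i : ℕ) = (j : ℕ) then 0
      else if G.Adj ⟨i, hi⟩ ⟨j, hj⟩ then 1 else -h
    else if (j : ℕ) = (i : ℕ) + n then (k : ℝ) - 1 else -ε
  else
    if hj : (j : ℕ) < n then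
      if (i : ℕ) = (j : ℕ) + n then (k : ℝ) - 1 else -ε
    else if (i : ℕ) = (j : ℕ) then h else -ε

/-- if `G` has a clique of size at least `k` and `S = {v_1, …, v_m}`
(wlog the first `m` indices) is a maximal clique containing it, `m ≥ k`, then the
strategy `p` uniform on `[m]` is a strict symmetric Nash equilibrium of the reduction
game: `(Ap)_i = (m−1)/m` for `i ∈ [m]` and `(Ap)_j < (m−1)/m` for `j ∉ [m]`. -/
theorem clique_gives_strict_NE {n k m : ℕ} (G : SimpleGraph (Fin n))
    [DecidableRel G.Adj]
    (huniv : ∃ v : Fin n, ∀ u, u ≠ v → G.Adj v u)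
    (hk : 0 < k) (hkn : k < n - 1)
    (h ε : ℝ) (hh : (2 * n ^ 2 + 5 : ℝ) < h)
    (hε : 0 < ε ∧ ε ≤ 1 / (10 * n ^ 3))
    (S : Finset (Fin n)) (hclique : G.IsClique (S : Set (Fin n)))
    (hmax : ∀ v ∉ S, ¬ (∀ u ∈ S, G.Adj v u))
    (hm : S.card = m) (hkm : k ≤ m)
    (hS : ∀ i : Fin n, i ∈ S ↔ (i : ℕ) < m)
    (p : Fin (2 * n) → ℝ)
    (hp : ∀ i : Fin (2 * n), p i = if (i : ℕ) < m then (m : ℝ)⁻¹ else 0) :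
    (∀ i : Fin (2 * n), (i : ℕ) < m →
      (redMatrix n k G h ε).mulVec p i = ((m : ℝ) - 1) / m) ∧
    (∀ j : Fin (2 * n), ¬ (j : ℕ) < m →
      (redMatrix n k G h ε).mulVec p j < ((m : ℝ) - 1) / m) := by
  classical
  obtain ⟨hε0, hεb⟩ := hε
  have hm1 : 1 ≤ m := le_trans hk hkm
  have hmn : m ≤ n := by
    rw [← hm]
    simpa using S.card_le_univ
  have hn3 : 3 ≤ n := by omega
  have h2n : m ≤ 2 * n := by omega
  have hmpos : (0:ℝ) < m := by exact_mod_cast lt_of_lt_of_le hk hkm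
  have hhpos : (0:ℝ) < h := by nlinarith [sq_nonneg ((n:ℝ))]
  -- m ≥ 2
  have hm2 : 2 ≤ m := by
    by_contra hlt
    have hm1' : m = 1 := by omega
    obtain ⟨v, hv⟩ := huniv
    by_cases hvS : v ∈ S
    · have hvm : (v:ℕ) < 1 := by rw [← hm1']; exact (hS v).mp hvS
      set u : Fin n := ⟨1, by omega⟩ with hu
      have huS : u ∉ S := by
        intro huS
        have := (hS u).mp huS
        simp [hu, hm1'] at this
      refine hmax u huS (fun w hwS => ?_)
      have hwv : w = v := by
        have h1 := (hS w).mp hwS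
        apply Fin.ext; omega
      rw [hwv]
      refine (hv u ?_).symm
      intro hh
      rw [hh] at hu
      have : (v:ℕ) = 1 := by rw [hu]
      omega
    · refine hmax v hvS (fun u huS => ?_)
      have huv : u ≠ v := fun hh => hvS (hh ▸ huS)
      exact hv u huv
  set A := redMatrix n k G h ε with hA
  set T : Finset (Fin (2*n)) := Finset.univ.filter (fun j : Fin (2*n) => (j:ℕ) < m) with hT
  have hmemT : ∀ j : Fin (2*n), j ∈ T ↔ (j:ℕ) < m := by
    intro j; simp [hT]
  have hTcard : T.card = m := by
    have : T = (Finset.range m).attachFin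
        (fun x hx => lt_of_lt_of_le (Finset.mem_range.mp hx) h2n) := by
      ext j
      simp [hT, Finset.mem_attachFin]
    rw [this, Finset.card_attachFin, Finset.card_range]
  have hmv : ∀ i : Fin (2*n), A.mulVec p i = (∑ j ∈ T, A i j) * (m:ℝ)⁻¹ := by
    intro i
    rw [Finset.sum_mul, hT, Finset.sum_filter]
    simp only [Matrix.mulVec, dotProduct, hp, mul_ite, mul_zero]
  constructor
  · intro i him
    have hin : (i:ℕ) < n := lt_of_lt_of_le him hmn
    have hiT : i ∈ T := (hmemT i).mpr him
    have hsum : ∑ j ∈ T, A i j = (m:ℝ) - 1 := by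
      rw [← Finset.add_sum_erase T _ hiT]
      have hAii : A i i = 0 := by
        simp [hA, redMatrix, hin]
      have hones : ∀ j ∈ T.erase i, A i j = 1 := by
        intro j hj
        obtain ⟨hji, hjT⟩ := Finset.mem_erase.mp hj
        have hjm : (j:ℕ) < m := (hmemT j).mp hjT
        have hjn : (j:ℕ) < n := lt_of_lt_of_le hjm hmn
        have hij : (i:ℕ) ≠ (j:ℕ) := by
          intro hh; exact hji (Fin.ext hh.symm)
        have hadj : G.Adj ⟨i, hin⟩ ⟨j, hjn⟩ := by
          apply hclique ((hS _).mpr him) ((hS _).mpr hjm)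
          simp only [ne_eq, Fin.mk.injEq]
          exact hij
        simp [hA, redMatrix, hin, hjn, hij, hadj]
      rw [Finset.sum_congr rfl hones, Finset.sum_const, nsmul_eq_mul, mul_one,
        Finset.card_erase_of_mem hiT, hTcard, hAii, zero_add]
      have : ((m - 1 : ℕ) : ℝ) = (m:ℝ) - 1 := by
        push_cast [hm1]; ring
      rw [this]
    rw [hmv, hsum, div_eq_mul_inv]
  · intro j hjm
    rw [hmv, div_eq_mul_inv]
    by_cases hjn : (j:ℕ) < n
    · -- vertex outside the clique: some non-neighbor in S gives a -h entry
      set v : Fin n := ⟨(j:ℕ), hjn⟩ with hv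
      have hvS : v ∉ S := by
        intro hvS
        exact hjm ((hS v).mp hvS)
      have := hmax v hvS
      push_neg at this
      obtain ⟨u, huS, hnadj⟩ := this
      have hum : (u:ℕ) < m := (hS u).mp huS
      set u2 : Fin (2*n) := ⟨(u:ℕ), by omega⟩ with hu2
      have hu2T : u2 ∈ T := (hmemT u2).mpr hum
      have hju : (j:ℕ) ≠ (u2:ℕ) := by
        intro hh
        apply hvS
        have : v = u := by apply Fin.ext; simpa [hv, hu2] using hh
        rw [this]; exact huS
      have hu2n : (u2:ℕ) < n := by
        simp only [hu2]; omega
      have hAju : A j u2 = -h := by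
        have hnadj2 : ¬ G.Adj ⟨(j:ℕ), hjn⟩ ⟨(u2:ℕ), hu2n⟩ := by
          have : (⟨(u2:ℕ), hu2n⟩ : Fin n) = u := by apply Fin.ext; simp [hu2]
          rw [this]; exact hnadj
        simp [hA, redMatrix, hjn, hu2n, hju, hnadj2]
      have hbound : ∀ j' ∈ T.erase u2, A j j' ≤ 1 := by
        intro j' hj'
        have hj'm : (j':ℕ) < m := (hmemT j').mp (Finset.mem_erase.mp hj').2
        have hj'n : (j':ℕ) < n := lt_of_lt_of_le hj'm hmn
        simp only [hA, redMatrix, hjn, hj'n, dif_pos]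
        split_ifs <;> linarith
      have hsumle : ∑ j' ∈ T, A j j' ≤ -h + ((m:ℝ) - 1) := by
        rw [← Finset.add_sum_erase T _ hu2T, hAju]
        have := Finset.sum_le_card_nsmul (T.erase u2) (fun j' => A j j') 1 hbound
        rw [Finset.card_erase_of_mem hu2T, hTcard, nsmul_eq_mul, mul_one] at this
        have hcast : ((m - 1 : ℕ) : ℝ) = (m:ℝ) - 1 := by push_cast [hm1]; ring
        rw [hcast] at this
        linarith
      have : (∑ j' ∈ T, A j j') * (m:ℝ)⁻¹ ≤ (-h + ((m:ℝ) - 1)) * (m:ℝ)⁻¹ := by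
        apply mul_le_mul_of_nonneg_right hsumle (by positivity)
      refine lt_of_le_of_lt this ?_
      apply mul_lt_mul_of_pos_right (by linarith) (by positivity)
    · -- bottom row: entries are k-1 (at most once) and -ε
      by_cases hjmn : (j:ℕ) < m + n
      · set j0 : Fin (2*n) := ⟨(j:ℕ) - n, by omega⟩ with hj0
        have hj0m : (j0:ℕ) < m := by simp only [hj0]; omega
        have hj0T : j0 ∈ T := (hmemT j0).mpr hj0m
        have hj0n : (j0:ℕ) < n := by omega
        have hAj0 : A j j0 = (k:ℝ) - 1 := by
          have heq : (j:ℕ) = (j0:ℕ) + n := by simp only [hj0]; omega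
          rw [hA]
          unfold redMatrix
          rw [dif_neg hjn, dif_pos hj0n, if_pos heq]
        have heps : ∀ j' ∈ T.erase j0, A j j' = -ε := by
          intro j' hj'
          obtain ⟨hne, hj'T⟩ := Finset.mem_erase.mp hj'
          have hj'm : (j':ℕ) < m := (hmemT j').mp hj'T
          have hj'n : (j':ℕ) < n := lt_of_lt_of_le hj'm hmn
          have hneq : (j:ℕ) ≠ (j':ℕ) + n := by
            intro hh
            apply hne
            apply Fin.ext
            simp only [hj0]
            omega
          simp [hA, redMatrix, hjn, hj'n, hneq]
        have hsum : ∑ j' ∈ T, A j j' = ((k:ℝ) - 1) + ((m:ℝ) - 1) * (-ε) := by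
          rw [← Finset.add_sum_erase T _ hj0T, hAj0,
            Finset.sum_congr rfl heps, Finset.sum_const, nsmul_eq_mul,
            Finset.card_erase_of_mem hj0T, hTcard]
          have hcast : ((m - 1 : ℕ) : ℝ) = (m:ℝ) - 1 := by push_cast [hm1]; ring
          rw [hcast]
        rw [hsum]
        apply mul_lt_mul_of_pos_right ?_ (by positivity)
        have hkm' : (k:ℝ) ≤ (m:ℝ) := by exact_mod_cast hkm
        have hm2' : (2:ℝ) ≤ (m:ℝ) := by exact_mod_cast hm2
        nlinarith
      · have heps : ∀ j' ∈ T, A j j' = -ε := by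
          intro j' hj'T
          have hj'm : (j':ℕ) < m := (hmemT j').mp hj'T
          have hj'n : (j':ℕ) < n := lt_of_lt_of_le hj'm hmn
          have hneq : (j:ℕ) ≠ (j':ℕ) + n := by omega
          simp [hA, redMatrix, hjn, hj'n, hneq]
        rw [Finset.sum_congr rfl heps, Finset.sum_const, nsmul_eq_mul, hTcard]
        have : (m:ℝ) * (-ε) * (m:ℝ)⁻¹ = -ε := by
          field_simp
        rw [this]
        have : (0:ℝ) ≤ ((m:ℝ) - 1) * (m:ℝ)⁻¹ := by
          apply mul_nonneg ?_ (by positivity)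
          have : (1:ℝ) ≤ (m:ℝ) := by exact_mod_cast hm1
          linarith
        linarith
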